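/- arXiv:2108.00185 — 2 statements merged into one kernel-verified Lean document; each statement's English description precedes it below -/
import Mathlib

section
/- Let R(i k₁, i k₂) = e^{i k₁} + i k₂ φ₁(i k₁) be the stability function of the partitioned exponential Euler method. Then for all real k₂ and all nonzero real k₁, | |R(i k₁, i k₂)| − 1 | ≤ 2 |k₂| / |k₁|. Hence for any fixed k₂, the magnitude of the instability (the excess of |R| above 1) tends to 0 as |k₁| → ∞: unlike explicit methods, the instabilities of the exponential integrator decrease in magnitude as k₁ increases. -/
open Complex

/-- The first exponential phi-function: φ₁(z) = (e^z − 1)/z for z ≠ 0, φ₁(0) = 1. -/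
noncomputable def phi1 (z : ℂ) : ℂ :=
  if z = 0 then 1 else (Complex.exp z - 1) / z

/-- Stability function of the partitioned exponential Euler method:
R(i k₁, i k₂) = e^{i k₁} + i k₂ φ₁(i k₁). -/
noncomputable def R (k₁ k₂ : ℝ) : ℂ :=
  Complex.exp (Complex.I * k₁) + Complex.I * k₂ * phi1 (Complex.I * k₁)

/- STATEMENT 8: For all real k₂ and nonzero real k₁,
   | |R(i k₁, i k₂)| − 1 | ≤ 2 |k₂| / |k₁|; the instability decays as |k₁| → ∞. -/

theorem instability_decays_with_k1 (k₂ : ℝ) (k₁ : ℝ) (hk₁ : k₁ ≠ 0) :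
    |‖R k₁ k₂‖ - 1| ≤ 2 * |k₂| / |k₁| := by
  have hz : (Complex.I * (k₁ : ℂ)) ≠ 0 := by
    simp [Complex.I_ne_zero, Complex.ofReal_ne_zero, hk₁]
  have hexp : ‖Complex.exp (Complex.I * k₁)‖ = 1 := by
    rw [mul_comm]
    exact Complex.norm_exp_ofReal_mul_I k₁
  have hphi : ‖phi1 (Complex.I * k₁)‖ ≤ 2 / |k₁| := by
    rw [phi1, if_neg hz, norm_div]
    have h1 : ‖Complex.exp (Complex.I * k₁) - 1‖ ≤ 2 := by
      calc ‖Complex.exp (Complex.I * k₁) - 1‖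
          ≤ ‖Complex.exp (Complex.I * k₁)‖ + ‖(1 : ℂ)‖ := by
            exact norm_sub_le _ (1 : ℂ)
        _ = 2 := by rw [hexp]; simp; norm_num
    have h2 : ‖Complex.I * (k₁ : ℂ)‖ = |k₁| := by
      simp [norm_mul, Complex.norm_real]
    rw [h2]
    gcongr
  have key : |‖R k₁ k₂‖ - 1| ≤ ‖Complex.I * k₂ * phi1 (Complex.I * k₁)‖ := by
    rw [← hexp]
    calc |‖R k₁ k₂‖ - ‖Complex.exp (Complex.I * k₁)‖|
        ≤ ‖R k₁ k₂ - Complex.exp (Complex.I * k₁)‖ :=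
          abs_norm_sub_norm_le _ _
      _ = ‖Complex.I * k₂ * phi1 (Complex.I * k₁)‖ := by rw [R]; ring_nf
  refine key.trans ?_
  rw [norm_mul, norm_mul, Complex.norm_I, one_mul, Complex.norm_real, Real.norm_eq_abs]
  calc |k₂| * ‖phi1 (Complex.I * k₁)‖
      ≤ |k₂| * (2 / |k₁|) := by gcongr
    _ = 2 * |k₂| / |k₁| := by ring
end

section
/- Fix ε > 0 and consider the repartitioned exponential Euler stability function along the line k₂ = 0: for k₁ > 0, R̂(k₁, 0) = e^{(i−ε)k₁} + ε k₁ φ₁((i − ε) k₁), where φ₁(z) = (e^z − 1)/z. Then R̂(k₁, 0) → (ε² + i ε)/(1 + ε²) as k₁ → +∞, and the modulus of this limit is ε/√(1 + ε²) < 1. Hence after repartitioning, the high-frequency modes (large k₁) are strictly damped rather than merely marginally stable. -/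
open Complex Filter

/- STATEMENT 12: For ε > 0, the repartitioned exponential Euler stability function
   along the line k₂ = 0, R̂(k₁,0) = e^{(i−ε)k₁} + ε k₁ φ₁((i−ε)k₁), tends to
   (ε² + iε)/(1 + ε²) as k₁ → +∞, whose modulus is ε/√(1+ε²) < 1. -/

theorem repartitioned_stability_high_frequency_damping (ε : ℝ) (hε : 0 < ε) :
    Tendsto
        (fun k₁ : ℝ =>
          Complex.exp ((Complex.I - ε) * k₁)
            + (ε : ℂ) * k₁ * phi1 ((Complex.I - ε) * k₁))
        atTop
        (nhds (((ε : ℂ) ^ 2 + Complex.I * ε) / (1 + (ε : ℂ) ^ 2))) ∧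
      ‖((ε : ℂ) ^ 2 + Complex.I * ε) / (1 + (ε : ℂ) ^ 2)‖
        = ε / Real.sqrt (1 + ε ^ 2) ∧
      ε / Real.sqrt (1 + ε ^ 2) < 1 := by
  have hw : (Complex.I - (ε : ℂ)) ≠ 0 := by
    intro h
    have h' := congrArg Complex.im h
    simp at h'
  have hden : (1 + (ε : ℂ) ^ 2) ≠ 0 := by
    intro h
    have h' : (1 : ℝ) + ε ^ 2 = 0 := by exact_mod_cast h
    nlinarith [sq_nonneg ε]
  refine ⟨?_, ?_, ?_⟩
  · -- limit
    have hlim0 : Tendsto (fun k₁ : ℝ => Complex.exp ((Complex.I - ε) * k₁)) atTop (nhds 0) := by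
      rw [tendsto_zero_iff_norm_tendsto_zero]
      have heq : ∀ k₁ : ℝ, ‖Complex.exp ((Complex.I - ε) * k₁)‖ = Real.exp (-ε * k₁) := by
        intro k₁
        rw [Complex.norm_exp]
        congr 1
        simp [Complex.sub_re, Complex.mul_re, Complex.sub_im, Complex.mul_im]
      simp_rw [heq]
      have h1 : Tendsto (fun k₁ : ℝ => -ε * k₁) atTop atBot := by
        simp_rw [neg_mul]
        exact tendsto_neg_atTop_atBot.comp (tendsto_id.const_mul_atTop hε)
      exact Real.tendsto_exp_atBot.comp h1
    have key : Tendsto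
        (fun k₁ : ℝ => Complex.exp ((Complex.I - ε) * k₁) * (1 + ε / (Complex.I - ε))
          - ε / (Complex.I - ε)) atTop
        (nhds (0 * (1 + ε / (Complex.I - ε)) - ε / (Complex.I - ε))) :=
      (hlim0.mul_const _).sub_const _
    have hval : (0 : ℂ) * (1 + ε / (Complex.I - ε)) - ε / (Complex.I - ε)
        = ((ε : ℂ) ^ 2 + Complex.I * ε) / (1 + (ε : ℂ) ^ 2) := by
      field_simp
      ring_nf
      simp [Complex.I_sq]
    rw [hval] at key
    refine key.congr' ?_
    filter_upwards [eventually_gt_atTop (0 : ℝ)] with k₁ hk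
    have hk' : ((k₁ : ℂ)) ≠ 0 := by exact_mod_cast hk.ne'
    have hz : (Complex.I - (ε : ℂ)) * k₁ ≠ 0 := mul_ne_zero hw hk'
    simp only [phi1, if_neg hz]
    field_simp
    ring
  · -- modulus
    rw [norm_div]
    have h1 : ‖(ε : ℂ) ^ 2 + Complex.I * ε‖ = ε * Real.sqrt (1 + ε ^ 2) := by
      rw [Complex.norm_def, Complex.normSq_apply]
      simp [Complex.add_re, Complex.add_im, Complex.mul_re, Complex.mul_im,
        ← Complex.ofReal_pow, Complex.ofReal_re, Complex.ofReal_im]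
      rw [show ε ^ 2 * ε ^ 2 + ε * ε = ε ^ 2 * (1 + ε ^ 2) by ring,
        Real.sqrt_mul (sq_nonneg ε), Real.sqrt_sq hε.le]
    have h2 : ‖1 + (ε : ℂ) ^ 2‖ = 1 + ε ^ 2 := by
      rw [show (1 + (ε : ℂ) ^ 2) = ((1 + ε ^ 2 : ℝ) : ℂ) by push_cast; ring,
        Complex.norm_real, Real.norm_eq_abs, abs_of_pos (by positivity)]
    rw [h1, h2]
    rw [eq_div_iff (by positivity : Real.sqrt (1 + ε ^ 2) ≠ 0)]
    rw [div_mul_eq_mul_div, mul_assoc, Real.mul_self_sqrt (by positivity)]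
    field_simp
  · rw [div_lt_one (by positivity)]
    rw [show (1 : ℝ) + ε ^ 2 = ε ^ 2 + 1 by ring]
    nlinarith [Real.sq_sqrt (by positivity : (0:ℝ) ≤ ε ^ 2 + 1), Real.sqrt_nonneg (ε ^ 2 + 1)]
end
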